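/- For any f ∈ L¹([0,L]) and ψ ∈ L¹([0,L]), the linearized operator W_f ψ = T ψ − 2 q(f, ψ), where q(f,ψ)(x) = ∫_0^x f(y) ψ(x−y) dy − ψ(x)∫_0^{L−x} f(y) dy − f(x)∫_0^{L−x} ψ(y) dy, has range contained in the annihilator of x: ∫_0^L x (W_f ψ)(x) dx = 0. -/

import Mathlib

open MeasureTheory Set

lemma helper_id (c : ℝ) (hc : 0 ≤ c) : ∫ x in Icc (0:ℝ) c, x = c^2/2 := by
  rw [integral_Icc_eq_integral_Ioc, ← intervalIntegral.integral_of_le hc, integral_id]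
  ring

lemma aux0 (L : ℝ) (hL : 0 < L) (ψ : ℝ → ℝ)
    (hψ : IntegrableOn ψ (Icc 0 L)) (hxψ : IntegrableOn (fun x => x * ψ x) (Icc 0 L)) :
    IntegrableOn (fun x => x * ∫ y in Icc x L, ψ y / y) (Icc 0 L)
    ∧ (∫ x in Icc 0 L, x * ∫ y in Icc x L, ψ y / y) = (1/2) * ∫ x in Icc 0 L, x * ψ x := by
  set G := indicator (Icc 0 L) ψ with hGdef
  have hGi : Integrable G := (integrable_indicator_iff measurableSet_Icc).2 hψ
  set h : ℝ × ℝ → ℝ := fun p =>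
    indicator (Icc 0 L) (fun x => x) p.1 * (G p.2 / p.2) *
      indicator {q : ℝ × ℝ | q.1 ≤ q.2} (fun _ => (1:ℝ)) p with hdef
  have hmeas : AEStronglyMeasurable h ((volume : Measure ℝ).prod volume) := by
    apply AEStronglyMeasurable.mul
    · apply AEStronglyMeasurable.mul
      · exact ((measurable_id.indicator measurableSet_Icc).comp measurable_fst).aestronglyMeasurable
      · simp only [div_eq_mul_inv]
        exact (hGi.1.comp_quasiMeasurePreserving Measure.quasiMeasurePreserving_snd).mul
          (measurable_snd.inv.aestronglyMeasurable)
    · exact (measurable_const.indicator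
        (measurableSet_le measurable_fst measurable_snd)).aestronglyMeasurable
  have hint : Integrable h ((volume : Measure ℝ).prod volume) := by
    apply Integrable.mono'
      (g := fun p : ℝ × ℝ => indicator (Icc 0 L) (fun _ => (1:ℝ)) p.1 * ‖G p.2‖) _ hmeas
    · filter_upwards with p
      obtain ⟨x, y⟩ := p
      by_cases hx : x ∈ Icc (0:ℝ) L
      · by_cases hxy : x ≤ y
        · have hmem : (x, y) ∈ {q : ℝ × ℝ | q.1 ≤ q.2} := hxy
          simp only [hdef, indicator_of_mem hx, indicator_of_mem hmem, id, mul_one]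
          rw [one_mul]
          rcases eq_or_lt_of_le (le_trans hx.1 hxy) with hy0 | hy0
          · simp [← hy0]
          · rw [Real.norm_eq_abs, abs_mul, abs_div, Real.norm_eq_abs]
            rw [abs_of_nonneg hx.1, abs_of_nonneg hy0.le, mul_comm]
            calc |G y| / y * x ≤ |G y| / y * y :=
                  mul_le_mul_of_nonneg_left hxy (by positivity)
              _ = |G y| := div_mul_cancel₀ _ (ne_of_gt hy0)
        · have : (x, y) ∉ {q : ℝ × ℝ | q.1 ≤ q.2} := hxy
          simp only [hdef, indicator_of_notMem this, mul_zero, norm_zero]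
          exact mul_nonneg (indicator_nonneg (fun _ _ => zero_le_one) _) (norm_nonneg _)
      · simp [hdef, indicator_of_notMem hx]
    · have h1 : Integrable (indicator (Icc (0:ℝ) L) (fun _ => (1:ℝ))) := by
        rw [integrable_indicator_iff measurableSet_Icc]
        exact integrableOn_const measure_Icc_lt_top.ne
      exact h1.mul_prod hGi.norm
  have key1 : (fun x => ∫ y, h (x, y)) =
      indicator (Icc 0 L) (fun x => x * ∫ y in Icc x L, ψ y / y) := by
    funext x
    by_cases hx : x ∈ Icc (0:ℝ) L
    · rw [indicator_of_mem hx]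
      have hfun : (fun y => h (x, y)) =
          fun y => x * indicator (Icc x L) (fun y => ψ y / y) y := by
        funext y
        simp only [hdef]
        by_cases hy : y ∈ Icc x L
        · have hyI : y ∈ Icc (0:ℝ) L := ⟨le_trans hx.1 hy.1, hy.2⟩
          have hmem : (x, y) ∈ {q : ℝ × ℝ | q.1 ≤ q.2} := hy.1
          rw [indicator_of_mem hx, indicator_of_mem hy, indicator_of_mem hmem,
            hGdef, indicator_of_mem hyI]
          simp [mul_assoc]
        · rw [indicator_of_notMem hy]
          by_cases hxy : x ≤ y
          · have hyL : L < y := by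
              by_contra hc
              exact hy ⟨hxy, not_lt.1 hc⟩
            have : G y = 0 := indicator_of_notMem (fun hc => absurd hc.2 (not_le.2 hyL)) _
            simp [this]
          · have : (x, y) ∉ {q : ℝ × ℝ | q.1 ≤ q.2} := hxy
            simp [indicator_of_notMem this]
      rw [hfun, integral_const_mul, integral_indicator measurableSet_Icc]
    · rw [indicator_of_notMem hx]
      have : ∀ y, h (x, y) = 0 := by
        intro y
        simp [hdef, indicator_of_notMem hx]
      simp [this]
  have intOn1 : IntegrableOn (fun x => x * ∫ y in Icc x L, ψ y / y) (Icc 0 L) := by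
    have := hint.integral_prod_left
    rw [key1] at this
    exact (integrable_indicator_iff measurableSet_Icc).1 this
  refine ⟨intOn1, ?_⟩
  have lhs_eq : (∫ x in Icc 0 L, x * ∫ y in Icc x L, ψ y / y) = ∫ x, ∫ y, h (x, y) := by
    rw [key1, integral_indicator measurableSet_Icc]
  have hswap : (∫ x, ∫ y, h (x, y)) = ∫ y, ∫ x, h (x, y) :=
    integral_integral_swap (f := fun x y => h (x, y)) hint
  have key2 : (fun y => ∫ x, h (x, y)) =
      indicator (Icc 0 L) (fun y => ψ y / y * (y^2/2)) := by
    funext y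
    by_cases hy : y ∈ Icc (0:ℝ) L
    · rw [indicator_of_mem hy]
      have hfun : (fun x => h (x, y)) =
          fun x => (ψ y / y) * indicator (Icc 0 y) (fun x => x) x := by
        funext x
        simp only [hdef]
        by_cases hx : x ∈ Icc (0:ℝ) y
        · have hxI : x ∈ Icc (0:ℝ) L := ⟨hx.1, le_trans hx.2 hy.2⟩
          have hmem : (x, y) ∈ {q : ℝ × ℝ | q.1 ≤ q.2} := hx.2
          rw [indicator_of_mem hxI, indicator_of_mem hx, indicator_of_mem hmem,
            hGdef, indicator_of_mem hy]
          simp [mul_comm]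
        · rw [indicator_of_notMem hx]
          by_cases hx0 : x ∈ Icc (0:ℝ) L
          · have hxy : ¬ x ≤ y := by
              intro hc
              exact hx ⟨hx0.1, hc⟩
            have : (x, y) ∉ {q : ℝ × ℝ | q.1 ≤ q.2} := hxy
            simp [indicator_of_notMem this]
          · simp [indicator_of_notMem hx0]
      rw [hfun, integral_const_mul, integral_indicator measurableSet_Icc]
      rw [helper_id y hy.1]
    · rw [indicator_of_notMem hy]
      have hG0 : G y = 0 := indicator_of_notMem hy _
      have : ∀ x, h (x, y) = 0 := by
        intro x
        simp [hdef, hG0]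
      simp [this]
  have h0 : ∀ᵐ (y : ℝ), y ≠ 0 := by
    rw [ae_iff]
    have hs : {a : ℝ | ¬ a ≠ 0} = {0} := by ext a; simp
    rw [hs]
    exact measure_singleton 0
  rw [lhs_eq, hswap, key2, integral_indicator measurableSet_Icc]
  rw [show ((1:ℝ)/2) * ∫ x in Icc 0 L, x * ψ x = ∫ x in Icc 0 L, (1/2) * (x * ψ x) from
    (integral_const_mul _ _).symm]
  apply setIntegral_congr_ae measurableSet_Icc
  filter_upwards [h0] with y hy0 _
  field_simp

lemma auxC (L : ℝ) (f ψ : ℝ → ℝ)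
    (hf : IntegrableOn f (Icc 0 L)) (hxψ : IntegrableOn (fun x => x * ψ x) (Icc 0 L)) :
    IntegrableOn (fun x => (x * ψ x) * ∫ y in Icc 0 (L - x), f y) (Icc 0 L)
    ∧ IntegrableOn (fun y => f y * ∫ z in Icc 0 (L - y), z * ψ z) (Icc 0 L)
    ∧ (∫ x in Icc 0 L, (x * ψ x) * ∫ y in Icc 0 (L - x), f y)
      = ∫ y in Icc 0 L, f y * ∫ z in Icc 0 (L - y), z * ψ z := by
  set F := indicator (Icc 0 L) f with hFdef
  set G2 := indicator (Icc 0 L) (fun x => x * ψ x) with hG2def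
  have hFi : Integrable F := (integrable_indicator_iff measurableSet_Icc).2 hf
  have hG2i : Integrable G2 := (integrable_indicator_iff measurableSet_Icc).2 hxψ
  have hT : MeasurableSet {q : ℝ × ℝ | q.1 + q.2 ≤ L} :=
    measurableSet_le (measurable_fst.add measurable_snd) measurable_const
  set h : ℝ × ℝ → ℝ := fun p =>
    indicator {q : ℝ × ℝ | q.1 + q.2 ≤ L} (fun _ => (1:ℝ)) p * (G2 p.1 * F p.2) with hdef
  have hint : Integrable h ((volume : Measure ℝ).prod volume) := by
    apply Integrable.bdd_mul (c := 1) (hG2i.mul_prod hFi)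
      (measurable_const.indicator hT).aestronglyMeasurable
    refine ae_of_all _ (fun p => ?_)
    by_cases hp : p ∈ {q : ℝ × ℝ | q.1 + q.2 ≤ L} <;> simp [hp]
  have key1 : (fun x => ∫ y, h (x, y)) =
      indicator (Icc 0 L) (fun x => (x * ψ x) * ∫ y in Icc 0 (L - x), f y) := by
    funext x
    by_cases hx : x ∈ Icc (0:ℝ) L
    · rw [indicator_of_mem hx]
      have hG2x : G2 x = x * ψ x := indicator_of_mem hx _
      have hfun : (fun y => h (x, y)) =
          fun y => (x * ψ x) * indicator (Icc 0 (L - x)) f y := by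
        funext y
        simp only [hdef]
        by_cases hy : y ∈ Icc (0:ℝ) (L - x)
        · have hyI : y ∈ Icc (0:ℝ) L := ⟨hy.1, le_trans hy.2 (by linarith [hx.1])⟩
          have hmem : (x, y) ∈ {q : ℝ × ℝ | q.1 + q.2 ≤ L} := by
            simpa using by linarith [hy.2]
          rw [indicator_of_mem hmem, indicator_of_mem hy, hG2x, hFdef, indicator_of_mem hyI]
          ring
        · rw [indicator_of_notMem hy]
          by_cases hsum : x + y ≤ L
          · have hy0 : y < 0 := by
              by_contra hc
              exact hy ⟨not_lt.1 hc, by linarith⟩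
            have hF0 : F y = 0 :=
              indicator_of_notMem (fun hc => absurd hc.1 (not_le.2 hy0)) _
            simp [hF0]
          · have : (x, y) ∉ {q : ℝ × ℝ | q.1 + q.2 ≤ L} := hsum
            simp [indicator_of_notMem this]
      rw [hfun, integral_const_mul, integral_indicator measurableSet_Icc]
    · rw [indicator_of_notMem hx]
      have hG2x : G2 x = 0 := indicator_of_notMem hx _
      have : ∀ y, h (x, y) = 0 := fun y => by simp [hdef, hG2x]
      simp [this]
  have key2 : (fun y => ∫ x, h (x, y)) =
      indicator (Icc 0 L) (fun y => f y * ∫ z in Icc 0 (L - y), z * ψ z) := by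
    funext y
    by_cases hy : y ∈ Icc (0:ℝ) L
    · rw [indicator_of_mem hy]
      have hFy : F y = f y := indicator_of_mem hy _
      have hfun : (fun x => h (x, y)) =
          fun x => f y * indicator (Icc 0 (L - y)) (fun z => z * ψ z) x := by
        funext x
        simp only [hdef]
        by_cases hx : x ∈ Icc (0:ℝ) (L - y)
        · have hxI : x ∈ Icc (0:ℝ) L := ⟨hx.1, le_trans hx.2 (by linarith [hy.1])⟩
          have hmem : (x, y) ∈ {q : ℝ × ℝ | q.1 + q.2 ≤ L} := by
            simpa using by linarith [hx.2]
          rw [indicator_of_mem hmem, indicator_of_mem hx, hFy, hG2def, indicator_of_mem hxI]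
          ring
        · rw [indicator_of_notMem hx]
          by_cases hsum : x + y ≤ L
          · have hx0 : x < 0 := by
              by_contra hc
              exact hx ⟨not_lt.1 hc, by linarith⟩
            have hG0 : G2 x = 0 :=
              indicator_of_notMem (fun hc => absurd hc.1 (not_le.2 hx0)) _
            simp [hG0]
          · have : (x, y) ∉ {q : ℝ × ℝ | q.1 + q.2 ≤ L} := hsum
            simp [indicator_of_notMem this]
      rw [hfun, integral_const_mul, integral_indicator measurableSet_Icc]
    · rw [indicator_of_notMem hy]
      have hFy : F y = 0 := indicator_of_notMem hy _
      have : ∀ x, h (x, y) = 0 := fun x => by simp [hdef, hFy]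
      simp [this]
  have intOn1 : IntegrableOn (fun x => (x * ψ x) * ∫ y in Icc 0 (L - x), f y) (Icc 0 L) := by
    have := hint.integral_prod_left
    rw [key1] at this
    exact (integrable_indicator_iff measurableSet_Icc).1 this
  have intOn2 : IntegrableOn (fun y => f y * ∫ z in Icc 0 (L - y), z * ψ z) (Icc 0 L) := by
    have := hint.integral_prod_right
    rw [key2] at this
    exact (integrable_indicator_iff measurableSet_Icc).1 this
  refine ⟨intOn1, intOn2, ?_⟩
  calc (∫ x in Icc 0 L, (x * ψ x) * ∫ y in Icc 0 (L - x), f y)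
      = ∫ x, ∫ y, h (x, y) := by rw [key1, integral_indicator measurableSet_Icc]
    _ = ∫ y, ∫ x, h (x, y) := integral_integral_swap (f := fun x y => h (x, y)) hint
    _ = ∫ y in Icc 0 L, f y * ∫ z in Icc 0 (L - y), z * ψ z := by
        rw [key2, integral_indicator measurableSet_Icc]

lemma auxB (L : ℝ) (hL : 0 < L) (f ψ : ℝ → ℝ)
    (hf : IntegrableOn f (Icc 0 L)) (hψ : IntegrableOn ψ (Icc 0 L))
    (hxψ : IntegrableOn (fun x => x * ψ x) (Icc 0 L)) :
    IntegrableOn (fun x => x * ∫ y in Icc 0 x, f y * ψ (x - y)) (Icc 0 L)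
    ∧ (∫ x in Icc 0 L, x * ∫ y in Icc 0 x, f y * ψ (x - y))
      = ∫ y in Icc 0 L, f y *
          ((∫ z in Icc 0 (L - y), z * ψ z) + y * ∫ z in Icc 0 (L - y), ψ z) := by
  set F := indicator (Icc 0 L) f with hFdef
  set G := indicator (Icc 0 L) ψ with hGdef
  set w := indicator (Icc 0 L) (fun x : ℝ => x) with hwdef
  have hFi : Integrable F := (integrable_indicator_iff measurableSet_Icc).2 hf
  have hGi : Integrable G := (integrable_indicator_iff measurableSet_Icc).2 hψ
  have hconv : Integrable (fun p : ℝ × ℝ => F p.2 * G (p.1 - p.2))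
      ((volume : Measure ℝ).prod volume) := by
    have := hFi.convolution_integrand (ContinuousLinearMap.mul ℝ ℝ) hGi
    simpa using this
  set h : ℝ × ℝ → ℝ := fun p => w p.1 * (F p.2 * G (p.1 - p.2)) with hdef
  have hint : Integrable h ((volume : Measure ℝ).prod volume) := by
    apply Integrable.bdd_mul (c := L) hconv
      (((measurable_id.indicator measurableSet_Icc).comp measurable_fst).aestronglyMeasurable)
    refine ae_of_all _ (fun p => ?_)
    simp only [Function.comp_apply]
    by_cases hp : p.1 ∈ Icc (0:ℝ) L
    · rw [indicator_of_mem hp, Real.norm_eq_abs, id, abs_of_nonneg hp.1]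
      exact hp.2
    · rw [indicator_of_notMem hp, norm_zero]
      exact hL.le
  have key1 : (fun x => ∫ y, h (x, y)) =
      indicator (Icc 0 L) (fun x => x * ∫ y in Icc 0 x, f y * ψ (x - y)) := by
    funext x
    by_cases hx : x ∈ Icc (0:ℝ) L
    · rw [indicator_of_mem hx]
      have hwx : w x = x := indicator_of_mem hx _
      have hfun : (fun y => h (x, y)) =
          fun y => x * indicator (Icc 0 x) (fun y => f y * ψ (x - y)) y := by
        funext y
        simp only [hdef, hwx]
        by_cases hy : y ∈ Icc (0:ℝ) x
        · have hyI : y ∈ Icc (0:ℝ) L := ⟨hy.1, le_trans hy.2 hx.2⟩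
          have hxyI : x - y ∈ Icc (0:ℝ) L := ⟨by linarith [hy.2], by linarith [hy.1, hx.2]⟩
          rw [indicator_of_mem hy, hFdef, hGdef, indicator_of_mem hyI, indicator_of_mem hxyI]
        · rw [indicator_of_notMem hy]
          by_cases hy0 : 0 ≤ y
          · have hyx : x < y := by
              by_contra hc
              exact hy ⟨hy0, not_lt.1 hc⟩
            have hG0 : G (x - y) = 0 :=
              indicator_of_notMem (fun hc => absurd hc.1 (not_le.2 (by linarith))) _
            simp [hG0]
          · have hF0 : F y = 0 :=
              indicator_of_notMem (fun hc => absurd hc.1 hy0) _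
            simp [hF0]
      rw [hfun, integral_const_mul, integral_indicator measurableSet_Icc]
    · rw [indicator_of_notMem hx]
      have hwx : w x = 0 := indicator_of_notMem hx _
      have : ∀ y, h (x, y) = 0 := fun y => by simp [hdef, hwx]
      simp [this]
  have intOn1 : IntegrableOn (fun x => x * ∫ y in Icc 0 x, f y * ψ (x - y)) (Icc 0 L) := by
    have := hint.integral_prod_left
    rw [key1] at this
    exact (integrable_indicator_iff measurableSet_Icc).1 this
  refine ⟨intOn1, ?_⟩
  have key2 : (fun y => ∫ x, h (x, y)) =
      indicator (Icc 0 L) (fun y => f y *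
        ((∫ z in Icc 0 (L - y), z * ψ z) + y * ∫ z in Icc 0 (L - y), ψ z)) := by
    funext y
    by_cases hy : y ∈ Icc (0:ℝ) L
    · rw [indicator_of_mem hy]
      have hFy : F y = f y := indicator_of_mem hy _
      have step0 : (fun x => h (x, y)) = fun x => f y * (w x * G (x - y)) := by
        funext x
        simp only [hdef, hFy]
        ring
      have step2 : (∫ x, w x * G (x - y)) = ∫ z, w (z + y) * G z := by
        rw [← integral_sub_right_eq_self (fun z => w (z + y) * G z) y]
        congr 1
        funext x
        rw [sub_add_cancel]
      have step3 : (fun z => w (z + y) * G z) =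
          indicator (Icc 0 (L - y)) (fun z => (z + y) * ψ z) := by
        funext z
        by_cases hz : z ∈ Icc (0:ℝ) (L - y)
        · have hzI : z ∈ Icc (0:ℝ) L := ⟨hz.1, by linarith [hz.2, hy.1]⟩
          have hzyI : z + y ∈ Icc (0:ℝ) L := ⟨by linarith [hz.1, hy.1], by linarith [hz.2]⟩
          rw [indicator_of_mem hz, hwdef, hGdef, indicator_of_mem hzyI, indicator_of_mem hzI]
        · rw [indicator_of_notMem hz]
          by_cases hz0 : 0 ≤ z
          · have hzL : L - y < z := by
              by_contra hc
              exact hz ⟨hz0, not_lt.1 hc⟩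
            have hw0 : w (z + y) = 0 :=
              indicator_of_notMem (fun hc => absurd hc.2 (not_le.2 (by linarith))) _
            simp [hw0]
          · have hG0 : G z = 0 :=
              indicator_of_notMem (fun hc => absurd hc.1 hz0) _
            simp [hG0]
      have hsub1 : IntegrableOn (fun z => z * ψ z) (Icc 0 (L - y)) :=
        hxψ.mono_set (Icc_subset_Icc le_rfl (by linarith [hy.1]))
      have hsub2 : IntegrableOn ψ (Icc 0 (L - y)) :=
        hψ.mono_set (Icc_subset_Icc le_rfl (by linarith [hy.1]))
      have step4 : (∫ z in Icc 0 (L - y), (z + y) * ψ z)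
          = (∫ z in Icc 0 (L - y), z * ψ z) + y * ∫ z in Icc 0 (L - y), ψ z := by
        have : (∫ z in Icc 0 (L - y), (z + y) * ψ z)
            = ∫ z in Icc 0 (L - y), (z * ψ z + y * ψ z) := by
          apply setIntegral_congr_fun measurableSet_Icc
          intro z _
          ring
        rw [this, integral_add hsub1 (hsub2.const_mul y), integral_const_mul]
      rw [step0, integral_const_mul, step2, step3, integral_indicator measurableSet_Icc, step4]
    · rw [indicator_of_notMem hy]
      have hFy : F y = 0 := indicator_of_notMem hy _
      have : ∀ x, h (x, y) = 0 := fun x => by simp [hdef, hFy]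
      simp [this]
  calc (∫ x in Icc 0 L, x * ∫ y in Icc 0 x, f y * ψ (x - y))
      = ∫ x, ∫ y, h (x, y) := by rw [key1, integral_indicator measurableSet_Icc]
    _ = ∫ y, ∫ x, h (x, y) := integral_integral_swap (f := fun x y => h (x, y)) hint
    _ = _ := by rw [key2, integral_indicator measurableSet_Icc]


/-- The range of the linearized operator `W_f ψ = T ψ - 2 q(f, ψ)` is contained
in the annihilator of `x`: `∫_0^L x (W_f ψ)(x) dx = 0`. -/
theorem stmt_6 (L : ℝ) (hL : 0 < L) (f ψ : ℝ → ℝ)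
    (hf : IntegrableOn f (Set.Icc 0 L))
    (hψ : IntegrableOn ψ (Set.Icc 0 L))
    (hxf : IntegrableOn (fun x => x * f x) (Set.Icc 0 L))
    (hxψ : IntegrableOn (fun x => x * ψ x) (Set.Icc 0 L)) :
    (∫ x in Set.Icc 0 L, x *
        ((ψ x - 2 * ∫ y in Set.Icc x L, ψ y / y)
          - 2 * ((∫ y in Set.Icc 0 x, f y * ψ (x - y))
              - ψ x * (∫ y in Set.Icc 0 (L - x), f y)
              - f x * ∫ y in Set.Icc 0 (L - x), ψ y))) = 0 := by
  obtain ⟨h2int, h2eq⟩ := aux0 L hL ψ hψ hxψ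
  obtain ⟨h3int, h3eq⟩ := auxB L hL f ψ hf hψ hxψ
  obtain ⟨h4int, h4int', h4eq⟩ := auxC L f ψ hf hxψ
  obtain ⟨h5int, -, -⟩ := auxC L ψ f hψ hxf
  have hsplit3 : (∫ y in Icc 0 L, f y *
        ((∫ z in Icc 0 (L - y), z * ψ z) + y * ∫ z in Icc 0 (L - y), ψ z))
      = (∫ y in Icc 0 L, f y * ∫ z in Icc 0 (L - y), z * ψ z)
        + ∫ y in Icc 0 L, (y * f y) * ∫ z in Icc 0 (L - y), ψ z := by
    rw [setIntegral_congr_fun (μ := volume) measurableSet_Icc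
      (g := fun y => f y * (∫ z in Icc 0 (L - y), z * ψ z)
        + (y * f y) * ∫ z in Icc 0 (L - y), ψ z) (fun y _ => by ring)]
    exact integral_add h4int' h5int
  have hmain : (∫ x in Set.Icc 0 L, x *
        ((ψ x - 2 * ∫ y in Set.Icc x L, ψ y / y)
          - 2 * ((∫ y in Set.Icc 0 x, f y * ψ (x - y))
              - ψ x * (∫ y in Set.Icc 0 (L - x), f y)
              - f x * ∫ y in Set.Icc 0 (L - x), ψ y)))
      = (∫ x in Icc 0 L, x * ψ x)
        - 2 * (∫ x in Icc 0 L, x * ∫ y in Icc x L, ψ y / y)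
        - 2 * (∫ x in Icc 0 L, x * ∫ y in Icc 0 x, f y * ψ (x - y))
        + 2 * (∫ x in Icc 0 L, (x * ψ x) * ∫ y in Icc 0 (L - x), f y)
        + 2 * (∫ x in Icc 0 L, (x * f x) * ∫ y in Icc 0 (L - x), ψ y) := by
    rw [setIntegral_congr_fun (μ := volume) measurableSet_Icc
      (g := fun x => x * ψ x - 2 * (x * ∫ y in Icc x L, ψ y / y)
        - 2 * (x * ∫ y in Icc 0 x, f y * ψ (x - y))
        + 2 * ((x * ψ x) * ∫ y in Icc 0 (L - x), f y)
        + 2 * ((x * f x) * ∫ y in Icc 0 (L - x), ψ y)) (fun x _ => by ring)]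
    have hA2 : IntegrableOn (fun x => 2 * (x * ∫ y in Icc x L, ψ y / y)) (Icc 0 L) :=
      h2int.const_mul 2
    have hA3 : IntegrableOn (fun x => 2 * (x * ∫ y in Icc 0 x, f y * ψ (x - y))) (Icc 0 L) :=
      h3int.const_mul 2
    have hA4 : IntegrableOn (fun x => 2 * ((x * ψ x) * ∫ y in Icc 0 (L - x), f y)) (Icc 0 L) :=
      h4int.const_mul 2
    have hA5 : IntegrableOn (fun x => 2 * ((x * f x) * ∫ y in Icc 0 (L - x), ψ y)) (Icc 0 L) :=
      h5int.const_mul 2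
    have hA12 : IntegrableOn
        (fun x => x * ψ x - 2 * (x * ∫ y in Icc x L, ψ y / y)) (Icc 0 L) := by
      exact hxψ.sub hA2
    have hA123 : IntegrableOn
        (fun x => x * ψ x - 2 * (x * ∫ y in Icc x L, ψ y / y)
          - 2 * (x * ∫ y in Icc 0 x, f y * ψ (x - y))) (Icc 0 L) := by
      exact hA12.sub hA3
    have hA1234 : IntegrableOn
        (fun x => x * ψ x - 2 * (x * ∫ y in Icc x L, ψ y / y)
          - 2 * (x * ∫ y in Icc 0 x, f y * ψ (x - y))
          + 2 * ((x * ψ x) * ∫ y in Icc 0 (L - x), f y)) (Icc 0 L) := by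
      exact hA123.add hA4
    have e1 : (∫ x in Icc 0 L, (x * ψ x - 2 * (x * ∫ y in Icc x L, ψ y / y)
          - 2 * (x * ∫ y in Icc 0 x, f y * ψ (x - y))
          + 2 * ((x * ψ x) * ∫ y in Icc 0 (L - x), f y)
          + 2 * ((x * f x) * ∫ y in Icc 0 (L - x), ψ y)))
        = (∫ x in Icc 0 L, (x * ψ x - 2 * (x * ∫ y in Icc x L, ψ y / y)
          - 2 * (x * ∫ y in Icc 0 x, f y * ψ (x - y))
          + 2 * ((x * ψ x) * ∫ y in Icc 0 (L - x), f y)))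
          + ∫ x in Icc 0 L, 2 * ((x * f x) * ∫ y in Icc 0 (L - x), ψ y) :=
      integral_add hA1234 hA5
    have e2 : (∫ x in Icc 0 L, (x * ψ x - 2 * (x * ∫ y in Icc x L, ψ y / y)
          - 2 * (x * ∫ y in Icc 0 x, f y * ψ (x - y))
          + 2 * ((x * ψ x) * ∫ y in Icc 0 (L - x), f y)))
        = (∫ x in Icc 0 L, (x * ψ x - 2 * (x * ∫ y in Icc x L, ψ y / y)
          - 2 * (x * ∫ y in Icc 0 x, f y * ψ (x - y))))
          + ∫ x in Icc 0 L, 2 * ((x * ψ x) * ∫ y in Icc 0 (L - x), f y) :=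
      integral_add hA123 hA4
    have e3 : (∫ x in Icc 0 L, (x * ψ x - 2 * (x * ∫ y in Icc x L, ψ y / y)
          - 2 * (x * ∫ y in Icc 0 x, f y * ψ (x - y))))
        = (∫ x in Icc 0 L, (x * ψ x - 2 * (x * ∫ y in Icc x L, ψ y / y)))
          - ∫ x in Icc 0 L, 2 * (x * ∫ y in Icc 0 x, f y * ψ (x - y)) :=
      integral_sub hA12 hA3
    have e4 : (∫ x in Icc 0 L, (x * ψ x - 2 * (x * ∫ y in Icc x L, ψ y / y)))
        = (∫ x in Icc 0 L, x * ψ x)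
          - ∫ x in Icc 0 L, 2 * (x * ∫ y in Icc x L, ψ y / y) :=
      integral_sub hxψ hA2
    rw [e1, e2, e3, e4, integral_const_mul, integral_const_mul, integral_const_mul,
      integral_const_mul]
  rw [hmain, h2eq, h3eq, hsplit3, h4eq]
  ring
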